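/- If b = b_k,…,b_0 is a witness for a play prefix ρ = v_1,…,v_m, then ρ contains an even chain of length val(b). -/

import Mathlib

open scoped Classical

/-- Membership in `C⁻`, where `C = {lo,…,hi}`: everything of `C` except `hi` when `hi` is odd. -/
def CminusMem (lo hi c : ℕ) : Prop := lo ≤ c ∧ c ≤ hi ∧ (Even hi ∨ c ≠ hi)

/-- The index of the first position of an `i`-witness ending in colour `c`:
`1` for even witnesses and `0` for odd witnesses. -/
def startIdx (c : ℕ) : ℕ := if Even c then 1 else 0

variable {V : Type*}

/-- `p`, on indices `lo', lo'+1, …, len`, is a sequence of positions of the play prefix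
`v_1, …, v_m` that is strictly increasing, whose positions before the final one carry even
colours, and that satisfies inner and (strict) outer domination. -/
def IsIWitAux (φ : V → ℕ) (v : ℕ → V) (m lo' len : ℕ) (p : ℕ → ℕ) : Prop :=
  (∀ j, lo' ≤ j → j ≤ len → 1 ≤ p j ∧ p j ≤ m) ∧
  (∀ j, lo' ≤ j → j < len → p j < p (j + 1)) ∧
  (∀ j, lo' ≤ j → j < len → Even (φ (v (p j)))) ∧
  (∀ j, lo' ≤ j → j < len → ∀ t, p j ≤ t → t ≤ p (j + 1) →
      φ (v t) ≤ max (φ (v (p j))) (φ (v (p (j + 1))))) ∧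
  (∀ t, p len < t → t ≤ m → φ (v t) ≤ φ (v (p len)))

/-- `b = b_k,…,b_0` (with `b i` the entry of index `i`) is a witness for the play prefix
`v_1,…,v_m`, for the colouring `φ` into `C = {lo,…,hi}`. -/
def IsWitness (lo hi : ℕ) (φ : V → ℕ) (v : ℕ → V) (m k : ℕ) (b : ℕ → Option ℕ) : Prop :=
  (∀ i ≤ k, ∀ c, b i = some c → CminusMem lo hi c) ∧
  (∀ c, b 0 = some c → Even c) ∧
  ∃ p : ℕ → ℕ → ℕ,
    (∀ i ≤ k, ∀ c, b i = some c →
        IsIWitAux φ v m (startIdx c) (2 ^ i) (p i) ∧ φ (v (p i (2 ^ i))) = c) ∧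
    (∀ i j, i < j → j ≤ k → ∀ ci cj, b i = some ci → b j = some cj →
        p j (2 ^ j) < p i (startIdx ci))

/-- `q`, on indices `1,…,ℓ`, is an even chain of length `ℓ` in the play prefix `v_1,…,v_m`. -/
def IsEvenChain (φ : V → ℕ) (v : ℕ → V) (m ℓ : ℕ) (q : ℕ → ℕ) : Prop :=
  (∀ j, 1 ≤ j → j ≤ ℓ → 1 ≤ q j ∧ q j ≤ m) ∧
  (∀ j, 1 ≤ j → j < ℓ → q j < q (j + 1)) ∧
  (∀ j, 1 ≤ j → j ≤ ℓ → Even (φ (v (q j)))) ∧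
  (∀ j, 1 ≤ j → j < ℓ → ∀ t, q j ≤ t → t ≤ q (j + 1) →
      φ (v t) ≤ max (φ (v (q j))) (φ (v (q (j + 1)))))

/-- Indices of entries of the witness carrying an even colour. -/
noncomputable def evenIdx (k : ℕ) (b : ℕ → Option ℕ) : Finset ℕ :=
  (Finset.range (k + 1)).filter fun i => ∃ c, b i = some c ∧ Even c

/-- Indices of entries of the witness carrying an odd colour. -/
noncomputable def oddIdx (k : ℕ) (b : ℕ → Option ℕ) : Finset ℕ :=
  (Finset.range (k + 1)).filter fun i => ∃ c, b i = some c ∧ Odd c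

/-- `evenodd(b)`: the even indices if no entry is odd; otherwise the even indices above the
largest odd index `o`, together with `o`. -/
noncomputable def evenodd (k : ℕ) (b : ℕ → Option ℕ) : Finset ℕ :=
  if h : (oddIdx k b).Nonempty then
    ((evenIdx k b).filter fun i => (oddIdx k b).max' h < i) ∪ {(oddIdx k b).max' h}
  else evenIdx k b

/-- The value of a witness: `val(b) = Σ_{i ∈ evenodd(b)} 2^i`. -/
noncomputable def valw (k : ℕ) (b : ℕ → Option ℕ) : ℕ := ∑ i ∈ evenodd k b, 2 ^ i


lemma chain_append {φ : V → ℕ} {v : ℕ → V} {m a ℓ : ℕ} {r q : ℕ → ℕ}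
    (hr : IsEvenChain φ v m a r) (hq : IsEvenChain φ v m ℓ q)
    (ha : 1 ≤ a)
    (h1 : 1 ≤ ℓ → r a < q 1)
    (hdom : 1 ≤ ℓ → ∀ t, r a < t → t ≤ m → φ (v t) ≤ φ (v (r a))) :
    IsEvenChain φ v m (a + ℓ) (fun n => if n ≤ a then r n else q (n - a)) := by
  obtain ⟨hr1, hr2, hr3, hr4⟩ := hr
  obtain ⟨hq1, hq2, hq3, hq4⟩ := hq
  refine ⟨?_, ?_, ?_, ?_⟩
  · intro j hj1 hj2
    by_cases h : j ≤ a
    · simpa [h] using hr1 j hj1 h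
    · simp only [if_neg h]
      exact hq1 (j - a) (by omega) (by omega)
  · intro j hj1 hj2
    by_cases h : j + 1 ≤ a
    · simp only [if_pos (by omega : j ≤ a), if_pos h]
      exact hr2 j hj1 (by omega)
    · by_cases h' : j ≤ a
      · have hja : j = a := by omega
        simp only [if_pos h', if_neg h]
        subst hja
        have hq1' := h1 (by omega)
        have : j + 1 - j = 1 := by omega
        rw [this]
        exact hq1'
      · simp only [if_neg h', if_neg h]
        have e : j + 1 - a = (j - a) + 1 := by omega
        rw [e]
        exact hq2 (j - a) (by omega) (by omega)
  · intro j hj1 hj2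
    by_cases h : j ≤ a
    · simpa [h] using hr3 j hj1 h
    · simp only [if_neg h]
      exact hq3 (j - a) (by omega) (by omega)
  · intro j hj1 hj2 t ht1 ht2
    by_cases h : j + 1 ≤ a
    · simp only [if_pos (by omega : j ≤ a), if_pos h] at *
      exact hr4 j hj1 (by omega) t ht1 ht2
    · by_cases h' : j ≤ a
      · have hja : j = a := by omega
        subst hja
        simp only [if_pos h', if_neg h, (by omega : j + 1 - j = 1)] at *
        rcases eq_or_lt_of_le ht1 with he | hlt
        · rw [← he]; exact le_max_left _ _
        · have hℓ : 1 ≤ ℓ := by omega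
          have hm1 : q 1 ≤ m := (hq1 1 le_rfl hℓ).2
          exact le_trans (hdom hℓ t hlt (le_trans ht2 hm1)) (le_max_left _ _)
      · simp only [if_neg h', if_neg h, (by omega : j + 1 - a = (j - a) + 1)] at *
        exact hq4 (j - a) (by omega) (by omega) t ht1 ht2

lemma even_block_chain {φ : V → ℕ} {v : ℕ → V} {m len : ℕ} {p : ℕ → ℕ}
    (hw : IsIWitAux φ v m 1 len p) (hev : Even (φ (v (p len)))) :
    IsEvenChain φ v m len p := by
  obtain ⟨h1, h2, h3, h4, _⟩ := hw
  refine ⟨h1, h2, ?_, h4⟩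
  intro j hj1 hj2
  rcases lt_or_eq_of_le hj2 with h | h
  · exact h3 j hj1 h
  · rw [h]; exact hev

lemma odd_block_chain {φ : V → ℕ} {v : ℕ → V} {m len : ℕ} {p : ℕ → ℕ}
    (hw : IsIWitAux φ v m 0 len p) :
    IsEvenChain φ v m len (fun n => p (n - 1)) := by
  obtain ⟨h1, h2, h3, h4, _⟩ := hw
  refine ⟨?_, ?_, ?_, ?_⟩
  · intro j hj1 hj2
    exact h1 (j - 1) (by omega) (by omega)
  · intro j hj1 hj2
    simp only [(by omega : j + 1 - 1 = (j - 1) + 1)]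
    exact h2 (j - 1) (by omega) (by omega)
  · intro j hj1 hj2
    exact h3 (j - 1) (by omega) (by omega)
  · intro j hj1 hj2 t ht1 ht2
    simp only [(by omega : j + 1 - 1 = (j - 1) + 1)] at *
    exact h4 (j - 1) (by omega) (by omega) t ht1 ht2

lemma mem_evenodd {k : ℕ} {b : ℕ → Option ℕ} {i : ℕ} (h : i ∈ evenodd k b) :
    i ≤ k ∧ ∃ c, b i = some c := by
  unfold evenodd at h
  split at h
  · rename_i hno
    rcases Finset.mem_union.1 h with h | h
    · have h' := Finset.mem_filter.1 h |>.1
      have h'' := Finset.mem_filter.1 h'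
      obtain ⟨c, hc, _⟩ := h''.2
      exact ⟨by have := Finset.mem_range.1 h''.1; omega, c, hc⟩
    · have : i = (oddIdx k b).max' hno := Finset.mem_singleton.1 h
      have hmem := (oddIdx k b).max'_mem hno
      rw [← this] at hmem
      have h'' := Finset.mem_filter.1 hmem
      obtain ⟨c, hc, _⟩ := h''.2
      exact ⟨by have := Finset.mem_range.1 h''.1; omega, c, hc⟩
  · have h'' := Finset.mem_filter.1 h
    obtain ⟨c, hc, _⟩ := h''.2
    exact ⟨by have := Finset.mem_range.1 h''.1; omega, c, hc⟩

lemma evenIdx_update {k : ℕ} {b : ℕ → Option ℕ} {i1 : ℕ} :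
    evenIdx k (Function.update b i1 none) = (evenIdx k b).erase i1 := by
  ext i
  simp only [evenIdx, Finset.mem_filter, Finset.mem_erase, Finset.mem_range]
  constructor
  · rintro ⟨hi, c, hc, hev⟩
    by_cases h : i = i1
    · subst h; simp [Function.update] at hc
    · rw [Function.update_of_ne h] at hc
      exact ⟨h, hi, c, hc, hev⟩
  · rintro ⟨h, hi, c, hc, hev⟩
    exact ⟨hi, c, by rw [Function.update_of_ne h]; exact hc, hev⟩

lemma oddIdx_update {k : ℕ} {b : ℕ → Option ℕ} {i1 : ℕ} :
    oddIdx k (Function.update b i1 none) = (oddIdx k b).erase i1 := by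
  ext i
  simp only [oddIdx, Finset.mem_filter, Finset.mem_erase, Finset.mem_range]
  constructor
  · rintro ⟨hi, c, hc, hev⟩
    by_cases h : i = i1
    · subst h; simp [Function.update] at hc
    · rw [Function.update_of_ne h] at hc
      exact ⟨h, hi, c, hc, hev⟩
  · rintro ⟨h, hi, c, hc, hev⟩
    exact ⟨hi, c, by rw [Function.update_of_ne h]; exact hc, hev⟩

lemma evenodd_update {k : ℕ} {b : ℕ → Option ℕ} {i1 : ℕ} (hno : i1 ∉ oddIdx k b) :
    evenodd k (Function.update b i1 none) = (evenodd k b).erase i1 := by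
  have hodd : oddIdx k (Function.update b i1 none) = oddIdx k b := by
    rw [oddIdx_update, Finset.erase_eq_of_notMem hno]
  unfold evenodd
  rw [hodd, evenIdx_update]
  split
  · rename_i hne
    have hoe : (oddIdx k b).max' hne ∈ oddIdx k b := (oddIdx k b).max'_mem hne
    have hne' : (oddIdx k b).max' hne ≠ i1 := fun h => hno (h ▸ hoe)
    ext i
    simp only [Finset.mem_union, Finset.mem_filter, Finset.mem_erase, Finset.mem_singleton]
    constructor
    · rintro (⟨⟨hni, hmem⟩, hlt⟩ | he)
      · exact ⟨hni, Or.inl ⟨hmem, hlt⟩⟩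
      · exact ⟨he ▸ hne', Or.inr he⟩
    · rintro ⟨hni, (⟨hmem, hlt⟩ | he)⟩
      · exact Or.inl ⟨⟨hni, hmem⟩, hlt⟩
      · exact Or.inr he
  · rfl

lemma valw_pos_nonempty {k : ℕ} {b : ℕ → Option ℕ} (h : 1 ≤ valw k b) :
    (evenodd k b).Nonempty := by
  by_contra hc
  rw [Finset.not_nonempty_iff_eq_empty] at hc
  simp [valw, hc] at h

lemma main_aux (φ : V → ℕ) (v : ℕ → V) (m k : ℕ) (p : ℕ → ℕ → ℕ) :
    ∀ n (b : ℕ → Option ℕ), (evenodd k b).card ≤ n →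
    (∀ i ≤ k, ∀ c, b i = some c →
        IsIWitAux φ v m (startIdx c) (2 ^ i) (p i) ∧ φ (v (p i (2 ^ i))) = c) →
    (∀ i j, i < j → j ≤ k → ∀ ci cj, b i = some ci → b j = some cj →
        p j (2 ^ j) < p i (startIdx ci)) →
    ∃ q, IsEvenChain φ v m (valw k b) q ∧
      ∀ (hne : (evenodd k b).Nonempty), ∃ c, b ((evenodd k b).max' hne) = some c ∧
        q 1 = p ((evenodd k b).max' hne) (startIdx c) := by
  intro n
  induction n with
  | zero =>
    intro b hcard _ _
    have he : evenodd k b = ∅ := Finset.card_eq_zero.1 (Nat.le_zero.1 hcard)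
    refine ⟨fun _ => 0, ?_, ?_⟩
    · have : valw k b = 0 := by simp [valw, he]
      rw [this]
      exact ⟨fun j hj1 hj2 => by omega, fun j hj1 hj2 => by omega,
        fun j hj1 hj2 => by omega, fun j hj1 hj2 => by omega⟩
    · intro hne; rw [he] at hne; exact absurd hne (by simp)
  | succ n ih =>
    intro b hcard hwit horder
    by_cases hne : (evenodd k b).Nonempty
    case neg =>
      rw [Finset.not_nonempty_iff_eq_empty] at hne
      refine ⟨fun _ => 0, ?_, ?_⟩
      · have : valw k b = 0 := by simp [valw, hne]
        rw [this]
        exact ⟨fun j hj1 hj2 => by omega, fun j hj1 hj2 => by omega,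
          fun j hj1 hj2 => by omega, fun j hj1 hj2 => by omega⟩
      · intro hne'; rw [hne] at hne'; exact absurd hne' (by simp)
    case pos =>
    set i1 := (evenodd k b).max' hne with hi1def
    have hi1mem : i1 ∈ evenodd k b := (evenodd k b).max'_mem hne
    obtain ⟨hi1k, c1, hbc1⟩ := mem_evenodd hi1mem
    obtain ⟨hw, hcol⟩ := hwit i1 hi1k c1 hbc1
    rcases Nat.even_or_odd c1 with hev | hod
    · -- even top block
      have hs : startIdx c1 = 1 := if_pos hev
      set b' := Function.update b i1 (none : Option ℕ) with hb'def
      have hb'sub : ∀ i c, b' i = some c → b i = some c := by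
        intro i c hc
        by_cases h : i = i1
        · subst h; simp [hb'def, Function.update] at hc
        · rwa [hb'def, Function.update_of_ne h] at hc
      have hi1no : i1 ∉ oddIdx k b := by
        intro h
        obtain ⟨c', hc', hodd⟩ := (Finset.mem_filter.1 h).2
        rw [hbc1] at hc'
        have : c' = c1 := (Option.some.inj hc').symm
        subst this
        exact (Nat.not_odd_iff_even.2 hev) hodd
      have heo : evenodd k b' = (evenodd k b).erase i1 := evenodd_update hi1no
      have hcard' : (evenodd k b').card ≤ n := by
        rw [heo]
        have := Finset.card_erase_of_mem hi1mem
        omega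
      obtain ⟨q, hq, hqs⟩ := ih b' hcard'
        (fun i hik c hc => hwit i hik c (hb'sub i c hc))
        (fun i j hij hjk ci cj hci hcj => horder i j hij hjk ci cj (hb'sub i ci hci) (hb'sub j cj hcj))
      have hsum : valw k b = 2 ^ i1 + valw k b' := by
        rw [valw, valw, heo, Finset.add_sum_erase _ _ hi1mem]
      have hr : IsEvenChain φ v m (2 ^ i1) (p i1) := by
        rw [hs] at hw
        exact even_block_chain hw (hcol ▸ hev)
      have h1 : 1 ≤ valw k b' → p i1 (2 ^ i1) < q 1 := by
        intro hv
        have hne' := valw_pos_nonempty hv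
        obtain ⟨c2, hbc2, hq1⟩ := hqs hne'
        set i2 := (evenodd k b').max' hne' with hi2def
        have hi2mem : i2 ∈ evenodd k b' := (evenodd k b').max'_mem hne'
        have hi2mem' : i2 ∈ (evenodd k b).erase i1 := heo ▸ hi2mem
        have hi2ne : i2 ≠ i1 := (Finset.mem_erase.1 hi2mem').1
        have hi2memb : i2 ∈ evenodd k b := (Finset.mem_erase.1 hi2mem').2
        have hi2lt : i2 < i1 := lt_of_le_of_ne ((evenodd k b).le_max' i2 hi2memb) hi2ne
        have hbi2 : b i2 = some c2 := hb'sub i2 c2 hbc2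
        rw [hq1]
        exact horder i2 i1 hi2lt hi1k c2 c1 hbi2 hbc1
      have hdom : 1 ≤ valw k b' → ∀ t, p i1 (2 ^ i1) < t → t ≤ m →
          φ (v t) ≤ φ (v (p i1 (2 ^ i1))) := fun _ => hw.2.2.2.2
      refine ⟨fun nn => if nn ≤ 2 ^ i1 then p i1 nn else q (nn - 2 ^ i1), ?_, ?_⟩
      · rw [hsum]
        exact chain_append hr hq Nat.one_le_two_pow h1 hdom
      · intro hne'
        refine ⟨c1, hbc1, ?_⟩
        simp only [if_pos Nat.one_le_two_pow, hs]
        rfl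
    · -- odd top: evenodd = {i1}
      have hs : startIdx c1 = 0 := if_neg (Nat.not_even_iff_odd.2 hod)
      have hi1odd : i1 ∈ oddIdx k b := by
        simp only [oddIdx, Finset.mem_filter, Finset.mem_range]
        exact ⟨by omega, c1, hbc1, hod⟩
      have hno : (oddIdx k b).Nonempty := ⟨i1, hi1odd⟩
      have heod : evenodd k b = {i1} := by
        have hmaxo : (oddIdx k b).max' hno = i1 := by
          have h1 : i1 ∈ evenodd k b := hi1mem
          unfold evenodd at h1
          rw [dif_pos hno] at h1
          rcases Finset.mem_union.1 h1 with h | h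
          · exfalso
            obtain ⟨c', hc', hev'⟩ := (Finset.mem_filter.1 (Finset.mem_filter.1 h).1).2
            rw [hbc1] at hc'
            have : c' = c1 := (Option.some.inj hc').symm
            subst this
            exact (Nat.not_even_iff_odd.2 hod) hev'
          · exact (Finset.mem_singleton.1 h).symm
        unfold evenodd
        rw [dif_pos hno, hmaxo]
        have : (evenIdx k b).filter (fun i => (oddIdx k b).max' hno < i) = ∅ := by
          rw [Finset.eq_empty_iff_forall_notMem]
          intro x hx
          have hlt : i1 < x := by
            have := (Finset.mem_filter.1 hx).2
            rwa [hmaxo] at this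
          have hxmem : x ∈ evenodd k b := by
            unfold evenodd
            rw [dif_pos hno]
            exact Finset.mem_union_left _ hx
          have := (evenodd k b).le_max' x hxmem
          omega
        rw [hmaxo] at this
        rw [this, Finset.empty_union]
      have hval : valw k b = 2 ^ i1 := by simp [valw, heod]
      rw [hs] at hw
      refine ⟨fun nn => p i1 (nn - 1), ?_, ?_⟩
      · rw [hval]
        exact odd_block_chain hw
      · intro hne'
        exact ⟨c1, hbc1, by simp [hs]; rfl⟩

/-- If `b = b_k,…,b_0` is a witness for the play prefix `ρ = v_1,…,v_m`, then `ρ` contains an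
even chain of length `val(b)`. -/
theorem witness_even_chain (lo hi : ℕ) (hlo : lo = 1 ∨ lo = 2) (hlohi : lo ≤ hi)
    (φ : V → ℕ) (hφ : ∀ x, φ x ∈ Set.Icc lo hi) (v : ℕ → V) (m : ℕ) (hm : 1 ≤ m)
    (k : ℕ) (b : ℕ → Option ℕ) (hb : IsWitness lo hi φ v m k b) :
    ∃ q : ℕ → ℕ, IsEvenChain φ v m (valw k b) q := by
  obtain ⟨-, -, p, hwit, horder⟩ := hb
  obtain ⟨q, hq, -⟩ := main_aux φ v m k p (evenodd k b).card b le_rfl hwit horder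
  exact ⟨q, hq⟩
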